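/- arXiv:0804.4896 — 2 statements merged into one kernel-verified Lean document; each statement's English description precedes it below -/
import Mathlib

section
/- The actually occurring configuration selected by the race policy minimizes nothing in general, but its execution time is a lower bound condition for monotony: if for every OrchNet N in a pre-OrchNet ℕ, every daemon value ω, and every maximal configuration κ of the underlying net, E_ω(κ, N) ≥ E_ω(κ̄(N, ω), N) (where κ̄(N, ω) is the configuration actually occurring under the race policy), then ℕ is monotonic. -/
open scoped ENNReal Classical

/-- A Petri net: sets of places and transitions with flow given by pre/post sets,
    and initial marking `M0`. -/
structure PetriNet where
  P : Type
  T : Type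
  pre : T → Set P
  post : T → Set P
  M0 : Set P

namespace PetriNet

variable (N : PetriNet)

/-- Nodes of a net: places or transitions. -/
abbrev Node := N.P ⊕ N.T

/-- One-step flow relation. -/
def prec : N.Node → N.Node → Prop
  | Sum.inl p, Sum.inr t => p ∈ N.pre t
  | Sum.inr t, Sum.inl p => p ∈ N.post t
  | _, _ => False

/-- Causality (reflexive): reflexive-transitive closure of the flow relation. -/
def causLe : N.Node → N.Node → Prop := Relation.ReflTransGen N.prec

/-- Strict causality. -/
def causLt : N.Node → N.Node → Prop := Relation.TransGen N.prec

/-- Conflict: `x # y` iff distinct transitions below `x` and `y` share a preset place. -/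
def Conflict (x y : N.Node) : Prop :=
  ∃ t t' : N.T, t ≠ t' ∧ N.causLe (Sum.inr t) x ∧ N.causLe (Sum.inr t') y ∧
    (N.pre t ∩ N.pre t').Nonempty

/-- Concurrency. -/
def Concurrent (x y : N.Node) : Prop :=
  ¬ N.causLe x y ∧ ¬ N.causLe y x ∧ ¬ N.Conflict x y

/-- A configuration: causally closed and conflict-free set of nodes. -/
def IsConfiguration (κ : Set N.Node) : Prop :=
  (∀ x y : N.Node, N.causLe x y → y ∈ κ → x ∈ κ) ∧
  (∀ x ∈ κ, ∀ y ∈ κ, ¬ N.Conflict x y)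

/-- Maximal configuration. -/
def IsMaxConfiguration (κ : Set N.Node) : Prop :=
  N.IsConfiguration κ ∧ ∀ κ', N.IsConfiguration κ' → κ ⊆ κ' → κ' = κ

/-- A minimal place: no transition produces it. -/
def Minimal (p : N.P) : Prop := ∀ t : N.T, p ∉ N.post t

/-- Occurrence net: no self-conflict, causality a partial order with finite pasts,
    each place produced by at most one transition, `M0` the minimal places. -/
def IsOccurrenceNet : Prop :=
  (∀ x : N.Node, ¬ N.Conflict x x) ∧
  (∀ x y : N.Node, N.causLe x y → N.causLe y x → x = y) ∧
  (∀ t : N.T, {x : N.Node | N.causLe x (Sum.inr t)}.Finite) ∧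
  (∀ p : N.P, {t : N.T | p ∈ N.post t}.Subsingleton) ∧
  (N.M0 = {p : N.P | N.Minimal p})

/-! ### Timed semantics (dates, race policy) -/

/-- One step of the dating operator: a place gets the date of its producing transition
    (or its initial date if minimal), a transition is dated `max` of its preset dates
    plus its latency. -/
noncomputable def dateF (τ : N.T → ℝ≥0∞) (init : N.P → ℝ≥0∞)
    (f : N.Node → ℝ≥0∞) : N.Node → ℝ≥0∞
  | Sum.inl p => if N.Minimal p then init p else ⨆ t ∈ {t : N.T | p ∈ N.post t}, f (Sum.inr t)
  | Sum.inr t => (⨆ p ∈ N.pre t, f (Sum.inl p)) + τ t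

/-- The date of each node (least fixed point of `dateF`; on finite acyclic nets this is
    the usual recursive definition of dates). -/
noncomputable def date (τ : N.T → ℝ≥0∞) (init : N.P → ℝ≥0∞) : N.Node → ℝ≥0∞ :=
  ⨆ k, (N.dateF τ init)^[k] ⊥

/-- Execution time (latency) of a set of nodes: max of the dates of its nodes. -/
noncomputable def execTime (τ : N.T → ℝ≥0∞) (init : N.P → ℝ≥0∞) (κ : Set N.Node) : ℝ≥0∞ :=
  ⨆ x ∈ κ, N.date τ init x

/-- Transition `t` can extend configuration `κ`: it is enabled (preset in `κ`),
    not yet fired, and firing it keeps a configuration (no conflict with `κ`). -/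
def Extends (κ : Set N.Node) (t : N.T) : Prop :=
  Sum.inr t ∉ κ ∧ (∀ p ∈ N.pre t, Sum.inl p ∈ κ) ∧
  N.IsConfiguration (κ ∪ {Sum.inr t} ∪ Sum.inl '' N.post t)

/-- One step of the race policy: among the enabled transitions, one with minimal
    date fires (preempting its conflicting rivals). -/
def RaceStep (τ : N.T → ℝ≥0∞) (init : N.P → ℝ≥0∞) (κ κ' : Set N.Node) : Prop :=
  ∃ t : N.T, N.Extends κ t ∧
    (∀ t' : N.T, N.Extends κ t' → N.date τ init (Sum.inr t) ≤ N.date τ init (Sum.inr t')) ∧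
    κ' = κ ∪ {Sum.inr t} ∪ Sum.inl '' N.post t

/-- The initial configuration: the minimal places. -/
def initConf : Set N.Node := Sum.inl '' {p : N.P | N.Minimal p}

/-- `κ` is an actually occurring configuration under the race policy. -/
def Occurs (τ : N.T → ℝ≥0∞) (init : N.P → ℝ≥0∞) (κ : Set N.Node) : Prop :=
  Relation.ReflTransGen (N.RaceStep τ init) N.initConf κ ∧ ∀ t : N.T, ¬ N.Extends κ t

/-! ### Clusters -/

/-- Closure conditions for clusters: `t ∈ c → •t ⊆ c` and `p ∈ c → p• ⊆ c`. -/
def ClusterClosed (c : Set N.Node) : Prop :=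
  (∀ t : N.T, Sum.inr t ∈ c → ∀ p ∈ N.pre t, Sum.inl p ∈ c) ∧
  (∀ p : N.P, Sum.inl p ∈ c → ∀ t : N.T, p ∈ N.pre t → Sum.inr t ∈ c)

/-- A cluster: a minimal nonempty set of nodes satisfying the closure conditions. -/
def IsCluster (c : Set N.Node) : Prop :=
  c.Nonempty ∧ N.ClusterClosed c ∧
  ∀ c' : Set N.Node, c'.Nonempty → N.ClusterClosed c' → c' ⊆ c → c' = c

/-! ### Marking semantics, workflow nets -/

/-- Firing a transition in the (1-safe, set-based) marking semantics. -/
def Fires (M : Set N.P) (t : N.T) (M' : Set N.P) : Prop :=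
  N.pre t ⊆ M ∧ M' = (M \ N.pre t) ∪ N.post t

/-- Reachability between markings. -/
def Reach : Set N.P → Set N.P → Prop :=
  Relation.ReflTransGen (fun M M' => ∃ t : N.T, N.Fires M t M')

end PetriNet

open PetriNet

/-- Workflow net with source place `i` and sink place `o`. -/
def IsWorkflow (N : PetriNet) (i o : N.P) : Prop :=
  (∀ p : N.P, (∀ t : N.T, p ∉ N.post t) ↔ p = i) ∧
  (∀ p : N.P, (∀ t : N.T, p ∉ N.pre t) ↔ p = o) ∧
  N.M0 = {i}

/-- Soundness of a workflow net. -/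
def IsSound (N : PetriNet) (i o : N.P) : Prop :=
  (∀ M, N.Reach {i} M → N.Reach M {o}) ∧
  (∀ M, N.Reach {i} M → o ∈ M → M = {o}) ∧
  (∀ t : N.T, ∃ M, N.Reach {i} M ∧ N.pre t ⊆ M)

/-- 1-safety in the set-based semantics: a fired transition never re-marks a
    still-marked place. -/
def IsSafe (N : PetriNet) (i : N.P) : Prop :=
  ∀ M t M', N.Reach {i} M → N.Fires M t M' → (M \ N.pre t) ∩ N.post t = ∅

/-- Loop-freeness: the flow relation is acyclic. -/
def LoopFree (N : PetriNet) : Prop := ∀ x : N.Node, ¬ N.causLt x x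

/-- Net morphism: maps places to places and transitions to transitions, restricting
    to bijections on presets and postsets of transitions. -/
structure NetMorphism (U W : PetriNet) where
  fP : U.P → W.P
  fT : U.T → W.T
  pre_bij : ∀ t : U.T, Set.BijOn fP (U.pre t) (W.pre (fT t))
  post_bij : ∀ t : U.T, Set.BijOn fP (U.post t) (W.post (fT t))

/-- The induced map on nodes. -/
def NetMorphism.node {U W : PetriNet} (φ : NetMorphism U W) : U.Node → W.Node :=
  Sum.map φ.fP φ.fT

/-- `(U, φ)` is (a) branching-process unfolding of `W`: `U` is an occurrence net,
    `φ` a morphism mapping the minimal places of `U` bijectively onto those of `W`,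
    and every co-set of `U` matching the preset of a transition of `W` is the preset
    of exactly one transition of `U` above it. -/
def IsUnfolding (U W : PetriNet) (φ : NetMorphism U W) : Prop :=
  U.IsOccurrenceNet ∧
  Set.BijOn φ.fP {p : U.P | U.Minimal p} {p : W.P | ∀ t : W.T, p ∉ W.post t} ∧
  (∀ (X : Set U.P) (u : W.T),
    (∀ p ∈ X, ∀ q ∈ X, p = q ∨ U.Concurrent (Sum.inl p) (Sum.inl q)) →
    Set.BijOn φ.fP X (W.pre u) →
    ∃! t : U.T, U.pre t = X ∧ φ.fT t = u)

namespace PetriNet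

variable {N : PetriNet}

/-- prec-closed sets are causally closed. -/
lemma causLe_closed {S : Set N.Node}
    (h : ∀ x y : N.Node, N.prec x y → y ∈ S → x ∈ S) :
    ∀ x y : N.Node, N.causLe x y → y ∈ S → x ∈ S := by
  intro x y hxy hy
  induction hxy using Relation.ReflTransGen.head_induction_on with
  | refl => exact hy
  | head hstep _ ih => exact h _ _ hstep ih

/-- A strict causal predecessor of a place goes through its producer. -/
lemma producer_of_causLe {x : N.Node} {p : N.P}
    (h : N.causLe x (Sum.inl p)) (hx : x ≠ Sum.inl p) :
    ∃ t : N.T, p ∈ N.post t ∧ N.causLe x (Sum.inr t) := by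
  rcases (Relation.ReflTransGen.cases_tail h) with h' | ⟨c, hc, hstep⟩
  · exact absurd h'.symm hx
  · cases c with
    | inl q => cases hstep
    | inr t => exact ⟨t, hstep, hc⟩

lemma minimal_no_strict_pred {p : N.P} (hp : N.Minimal p) {x : N.Node}
    (h : N.causLe x (Sum.inl p)) : x = Sum.inl p := by
  by_contra hx
  obtain ⟨t, ht, -⟩ := producer_of_causLe h hx
  exact hp t ht

lemma initConf_isConfiguration : N.IsConfiguration N.initConf := by
  constructor
  · refine causLe_closed ?_
    rintro x y hxy ⟨p, hp, rfl⟩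
    cases x with
    | inl q => cases hxy
    | inr t => exact absurd hxy (hp t)
  · rintro x ⟨p, hp, rfl⟩ y hy ⟨t1, t2, hne, h1, h2, hpp⟩
    have := minimal_no_strict_pred hp h1
    cases this

lemma causLt_irrefl (hN : N.IsOccurrenceNet) (x : N.Node) : ¬ N.causLt x x := by
  intro h
  rcases (Relation.TransGen.head'_iff.mp h) with ⟨z, hxz, hzx⟩
  have h1 : N.causLe z x := hzx
  have h2 : N.causLe x z := Relation.ReflTransGen.single hxz
  have hzxeq : x = z := hN.2.1 x z h2 h1
  subst hzxeq
  cases x <;> cases hxz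

/-- Invariant of the race policy. -/
lemma race_invariant {τ : N.T → ℝ≥0∞} {init : N.P → ℝ≥0∞} {κ : Set N.Node}
    (h : Relation.ReflTransGen (N.RaceStep τ init) N.initConf κ) :
    N.initConf ⊆ κ ∧ (∀ t : N.T, Sum.inr t ∈ κ → ∀ p ∈ N.post t, Sum.inl p ∈ κ) ∧
      N.IsConfiguration κ := by
  induction h with
  | refl =>
    refine ⟨subset_rfl, ?_, initConf_isConfiguration⟩
    rintro t ⟨p, -, hp⟩
    cases hp
  | tail _ hstep ih =>
    obtain ⟨hsub, hpost, -⟩ := ih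
    obtain ⟨t, hext, -, rfl⟩ := hstep
    refine ⟨hsub.trans (by intro z hz; exact Or.inl (Or.inl hz)), ?_, hext.2.2⟩
    rintro t' ht' p hp
    rcases ht' with (ht' | ht') | ⟨q, -, hq⟩
    · exact Or.inl (Or.inl (hpost t' ht' p hp))
    · obtain rfl : t' = t := by simpa using ht'
      exact Or.inr ⟨p, hp, rfl⟩
    · cases hq

/-- An actually occurring configuration is a maximal configuration. -/
lemma occurs_isMaxConfiguration [Fintype N.P] [Fintype N.T]
    (hN : N.IsOccurrenceNet) {τ : N.T → ℝ≥0∞} {init : N.P → ℝ≥0∞} {κ : Set N.Node}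
    (h : N.Occurs τ init κ) : N.IsMaxConfiguration κ := by
  obtain ⟨hreach, hnoext⟩ := h
  obtain ⟨hinit, hpost, hconf⟩ := race_invariant hreach
  refine ⟨hconf, ?_⟩
  intro κ'' hconf'' hsub
  by_contra hne
  -- pick a causally minimal element of κ'' \ κ
  have hwf : WellFounded N.causLt := by
    have ht : Transitive N.causLt := fun a b c => Relation.TransGen.trans
    have hi : ∀ x, ¬ N.causLt x x := causLt_irrefl hN
    haveI : IsTrans N.Node N.causLt := ⟨fun a b c => Relation.TransGen.trans⟩
    haveI : IsIrrefl N.Node N.causLt := ⟨hi⟩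
    exact Finite.wellFounded_of_trans_of_irrefl _
  have hDne : (κ'' \ κ).Nonempty := by
    rcases Set.not_subset.mp (fun hs => hne (Set.Subset.antisymm hs hsub)) with ⟨x, hx1, hx2⟩
    exact ⟨x, hx1, hx2⟩
  obtain ⟨x, hxD, hxmin⟩ := hwf.has_min (κ'' \ κ) hDne
  -- x must be a transition
  cases x with
  | inl p =>
    by_cases hp : N.Minimal p
    · exact hxD.2 (hinit ⟨p, hp, rfl⟩)
    · obtain ⟨t0, ht0⟩ := not_forall_not.mp (fun hc => hp hc)
      have hprec : N.prec (Sum.inr t0) (Sum.inl p) := ht0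
      have htκ'' : Sum.inr t0 ∈ κ'' :=
        hconf''.1 _ _ (Relation.ReflTransGen.single hprec) hxD.1
      by_cases htκ : Sum.inr t0 ∈ κ
      · exact hxD.2 (hpost t0 htκ p ht0)
      · exact hxmin _ ⟨htκ'', htκ⟩ (Relation.TransGen.single hprec)
  | inr t =>
    have hnotin : Sum.inr t ∉ κ := hxD.2
    have hpre : ∀ p ∈ N.pre t, Sum.inl p ∈ κ := by
      intro p hp
      have hprec : N.prec (Sum.inl p) (Sum.inr t) := hp
      have hpκ'' : Sum.inl p ∈ κ'' :=
        hconf''.1 _ _ (Relation.ReflTransGen.single hprec) hxD.1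
      by_contra hpκ
      exact hxmin _ ⟨hpκ'', hpκ⟩ (Relation.TransGen.single hprec)
    set S : Set N.Node := κ ∪ {Sum.inr t} ∪ Sum.inl '' N.post t with hS
    have hSconf : N.IsConfiguration S := by
      constructor
      · refine causLe_closed ?_
        intro z y hzy hy
        rcases hy with (hy | hy) | ⟨q, hq, rfl⟩
        · exact Or.inl (Or.inl (hconf.1 z y (Relation.ReflTransGen.single hzy) hy))
        · rcases hy with rfl
          cases z with
          | inl p => exact Or.inl (Or.inl (hpre p hzy))
          | inr t' => cases hzy
        · cases z with
          | inl p' => cases hzy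
          | inr t'' =>
            have : t'' = t := hN.2.2.2.1 q hzy hq
            subst this
            exact Or.inl (Or.inr rfl)
      · -- conflict-freeness: reduce any node of S to a node of κ'' dominating
        -- the same transitions
        have hred : ∀ u ∈ S, ∃ uh ∈ κ'',
            ∀ s : N.T, N.causLe (Sum.inr s) u → N.causLe (Sum.inr s) uh := by
          rintro u ((hu | hu) | ⟨q, hq, rfl⟩)
          · exact ⟨u, hsub hu, fun s hs => hs⟩
          · rcases hu with rfl
            exact ⟨Sum.inr t, hxD.1, fun s hs => hs⟩
          · refine ⟨Sum.inr t, hxD.1, ?_⟩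
            intro s hs
            obtain ⟨t'', ht'', hle⟩ := producer_of_causLe hs (by simp)
            have : t'' = t := hN.2.2.2.1 q ht'' hq
            subst this
            exact hle
        rintro u hu v hv ⟨t1, t2, hne12, h1, h2, hpp⟩
        obtain ⟨uh, huh, hredu⟩ := hred u hu
        obtain ⟨vh, hvh, hredv⟩ := hred v hv
        exact hconf''.2 uh huh vh hvh ⟨t1, t2, hne12, hredu t1 h1, hredv t2 h2, hpp⟩
    exact hnoext t ⟨hnotin, hpre, hSconf⟩

/-- Monotony of dates in latencies and initial dates. -/
lemma date_mono {τ τ' : N.T → ℝ≥0∞} {init init' : N.P → ℝ≥0∞}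
    (hτ : ∀ t, τ' t ≤ τ t) (hi : ∀ p, init' p ≤ init p) (x : N.Node) :
    N.date τ' init' x ≤ N.date τ init x := by
  have key : ∀ k : ℕ, ∀ y : N.Node,
      (N.dateF τ' init')^[k] ⊥ y ≤ (N.dateF τ init)^[k] ⊥ y := by
    intro k
    induction k with
    | zero => intro y; exact le_rfl
    | succ n ih =>
      intro y
      rw [Function.iterate_succ_apply', Function.iterate_succ_apply']
      cases y with
      | inl p =>
        simp only [dateF]
        split
        · exact hi p
        · exact iSup₂_mono fun t _ => ih (Sum.inr t)
      | inr t =>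
        exact add_le_add (iSup₂_mono fun p _ => ih (Sum.inl p)) (hτ t)
  simp only [date, iSup_apply]
  exact iSup_mono fun k => key k x

lemma execTime_mono {τ τ' : N.T → ℝ≥0∞} {init init' : N.P → ℝ≥0∞}
    (hτ : ∀ t, τ' t ≤ τ t) (hi : ∀ p, init' p ≤ init p) (κ : Set N.Node) :
    N.execTime τ' init' κ ≤ N.execTime τ init κ :=
  iSup₂_mono fun x _ => date_mono hτ hi x

end PetriNet

/-- Theorem 1, statement 1: if for every allowed latency/initial-date
    assignment, every daemon-resolved instance, and every maximal configuration `κ`,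
    the execution time of `κ` dominates that of the actually occurring configuration,
    then the pre-OrchNet is monotonic. -/
theorem stmt7 (N : PetriNet) [Fintype N.P] [Fintype N.T] (hN : N.IsOccurrenceNet)
    {Ω : Type}
    (𝕋 : Set (Ω → N.T → ℝ≥0∞)) (𝕀 : Set (Ω → N.P → ℝ≥0∞))
    (hcond : ∀ T ∈ 𝕋, ∀ I ∈ 𝕀, ∀ ω : Ω, ∀ κ : Set N.Node, N.IsMaxConfiguration κ →
      ∀ κocc : Set N.Node, N.Occurs (T ω) (I ω) κocc →
        N.execTime (T ω) (I ω) κocc ≤ N.execTime (T ω) (I ω) κ) :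
    -- monotony: larger latencies and initial dates give larger end-to-end latency
    ∀ T ∈ 𝕋, ∀ T' ∈ 𝕋, ∀ I ∈ 𝕀, ∀ I' ∈ 𝕀,
      (∀ ω t, T' ω t ≤ T ω t) → (∀ ω p, I' ω p ≤ I ω p) →
      ∀ ω : Ω, ∀ κ κ' : Set N.Node,
        N.Occurs (T ω) (I ω) κ → N.Occurs (T' ω) (I' ω) κ' →
        N.execTime (T' ω) (I' ω) κ' ≤ N.execTime (T ω) (I ω) κ := by
  intro T hT T' hT' I hI I' hI' hτ hi ω κ κ' hocc hocc'
  have hmax : N.IsMaxConfiguration κ := occurs_isMaxConfiguration hN hocc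
  calc N.execTime (T' ω) (I' ω) κ' ≤ N.execTime (T' ω) (I' ω) κ :=
        hcond T' hT' I' hI' ω κ hmax κ' hocc'
    _ ≤ N.execTime (T ω) (I ω) κ := execTime_mono (hτ ω) (hi ω) κ
end

section
/- If in an OrchNet N' the latencies of all transitions not in a maximal configuration κ† exceed E_ω(κ†, N'), and the latencies of transitions in κ† are unchanged from N, then the race-policy construction yields κ̄(N', ω) = κ†. -/
open scoped ENNReal Classical

open PetriNet

/-! ### Auxiliary lemmas for stmt9 -/

section Stmt9Aux

variable {N : PetriNet}

lemma stmt9_conflict_symm {x y : N.Node} (h : N.Conflict x y) : N.Conflict y x := by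
  obtain ⟨t, t', hne, hx, hy, hint⟩ := h
  exact ⟨t', t, hne.symm, hy, hx, by rwa [Set.inter_comm]⟩

lemma stmt9_causLe_inr {x : N.Node} {t : N.T} (h : N.causLe x (Sum.inr t)) :
    x = Sum.inr t ∨ ∃ p ∈ N.pre t, N.causLe x (Sum.inl p) := by
  rcases Relation.ReflTransGen.cases_tail h with h | ⟨y, hxy, hy⟩
  · exact Or.inl h.symm
  · cases y with
    | inl p => exact Or.inr ⟨p, hy, hxy⟩
    | inr s => exact absurd hy (by simp [PetriNet.prec])

lemma stmt9_causLe_inl {x : N.Node} {p : N.P} (h : N.causLe x (Sum.inl p)) :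
    x = Sum.inl p ∨ ∃ t : N.T, p ∈ N.post t ∧ N.causLe x (Sum.inr t) := by
  rcases Relation.ReflTransGen.cases_tail h with h | ⟨y, hxy, hy⟩
  · exact Or.inl h.symm
  · cases y with
    | inl q => exact absurd hy (by simp [PetriNet.prec])
    | inr s => exact Or.inr ⟨s, hy, hxy⟩

lemma stmt9_prec_inl_inr {p : N.P} {t : N.T} (h : p ∈ N.pre t) :
    N.prec (Sum.inl p) (Sum.inr t) := h

lemma stmt9_prec_inr_inl {p : N.P} {t : N.T} (h : p ∈ N.post t) :
    N.prec (Sum.inr t) (Sum.inl p) := h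

/-- No transition lies below a minimal place. -/
lemma stmt9_minimal_no_trans {p : N.P} (hp : N.Minimal p) {t : N.T}
    (h : N.causLe (Sum.inr t) (Sum.inl p)) : False := by
  rcases stmt9_causLe_inl h with h | ⟨s, hs, _⟩
  · exact Sum.inr_ne_inl h
  · exact hp s hs

/-- Conflict with a node of the form `inl p`, `p ∈ post t`, gives conflict with `inr t`. -/
lemma stmt9_conflict_post (hN : N.IsOccurrenceNet) {x : N.Node} {p : N.P} {t : N.T}
    (hp : p ∈ N.post t) (h : N.Conflict x (Sum.inl p)) : N.Conflict x (Sum.inr t) := by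
  obtain ⟨t1, t2, hne, h1, h2, hint⟩ := h
  rcases stmt9_causLe_inl h2 with h2' | ⟨s, hs, h2'⟩
  · exact absurd h2' Sum.inr_ne_inl
  · have : s = t := hN.2.2.2.1 p hs hp
    subst this
    exact ⟨t1, t2, hne, h1, h2', hint⟩

end Stmt9Aux
section Stmt9Aux2

variable {N : PetriNet} {κdag : Set N.Node}

/-- κ† contains all minimal places. -/
lemma stmt9_init_subset (hN : N.IsOccurrenceNet) (hκ : N.IsMaxConfiguration κdag) :
    N.initConf ⊆ κdag := by
  have hconf : N.IsConfiguration (κdag ∪ N.initConf) := by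
    constructor
    · intro x y hxy hy
      rcases hy with hy | hy
      · exact Or.inl (hκ.1.1 x y hxy hy)
      · obtain ⟨p, hp, rfl⟩ := hy
        rcases stmt9_causLe_inl hxy with rfl | ⟨s, hs, _⟩
        · exact Or.inr ⟨p, hp, rfl⟩
        · exact absurd hs (hp s)
    · intro x hx y hy hc
      rcases hy with hy | hy
      · rcases hx with hx | hx
        · exact hκ.1.2 x hx y hy hc
        · obtain ⟨p, hp, rfl⟩ := hx
          obtain ⟨t1, t2, _, _, h2, _⟩ := stmt9_conflict_symm hc
          exact stmt9_minimal_no_trans hp h2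
      · obtain ⟨p, hp, rfl⟩ := hy
        obtain ⟨t1, t2, _, _, h2, _⟩ := hc
        exact stmt9_minimal_no_trans hp h2
  have := hκ.2 _ hconf Set.subset_union_left
  rw [← this]
  exact Set.subset_union_right

/-- κ† contains the postset places of each of its transitions. -/
lemma stmt9_post_subset (hN : N.IsOccurrenceNet) (hκ : N.IsMaxConfiguration κdag)
    {t : N.T} (ht : Sum.inr t ∈ κdag) {p : N.P} (hp : p ∈ N.post t) :
    Sum.inl p ∈ κdag := by
  have hconf : N.IsConfiguration (κdag ∪ Sum.inl '' N.post t) := by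
    constructor
    · intro x y hxy hy
      rcases hy with hy | hy
      · exact Or.inl (hκ.1.1 x y hxy hy)
      · obtain ⟨q, hq, rfl⟩ := hy
        rcases stmt9_causLe_inl hxy with rfl | ⟨s, hs, hxs⟩
        · exact Or.inr ⟨q, hq, rfl⟩
        · have : s = t := hN.2.2.2.1 q hs hq
          subst this
          exact Or.inl (hκ.1.1 x _ hxs ht)
    · intro x hx y hy hc
      -- reduce conflicts with new nodes to conflicts with `inr t`
      have key : ∀ z ∈ κdag ∪ Sum.inl '' N.post t, ∀ w ∈ κdag, N.Conflict w z → False := by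
        intro z hz w hw hc
        rcases hz with hz | hz
        · exact hκ.1.2 w hw z hz hc
        · obtain ⟨q, hq, rfl⟩ := hz
          exact hκ.1.2 w hw _ ht (stmt9_conflict_post hN hq hc)
      rcases hx with hx | hx
      · exact key y hy x hx hc
      · obtain ⟨q, hq, rfl⟩ := hx
        have hc' : N.Conflict y (Sum.inr t) := stmt9_conflict_post hN hq (stmt9_conflict_symm hc)
        exact key y hy _ ht (stmt9_conflict_symm hc')
  have := hκ.2 _ hconf Set.subset_union_left
  rw [← this]
  exact Or.inr ⟨p, hp, rfl⟩

/-- κ† contains the preset of each of its transitions. -/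
lemma stmt9_pre_subset (hκ : N.IsMaxConfiguration κdag)
    {t : N.T} (ht : Sum.inr t ∈ κdag) {p : N.P} (hp : p ∈ N.pre t) :
    Sum.inl p ∈ κdag :=
  hκ.1.1 _ _ (Relation.ReflTransGen.single (stmt9_prec_inl_inr hp)) ht

/-- No transition extends a maximal configuration. -/
lemma stmt9_max_no_extends (hκ : N.IsMaxConfiguration κdag) (t : N.T) :
    ¬ N.Extends κdag t := by
  rintro ⟨htκ, -, hconf⟩
  have := hκ.2 _ hconf (Set.subset_union_left.trans Set.subset_union_left)
  apply htκ
  rw [← this]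
  exact Or.inl (Or.inr rfl)

end Stmt9Aux2
/-- The invariant maintained along race-policy executions. -/
def Stmt9Inv (N : PetriNet) (κdag κ : Set N.Node) : Prop :=
  κ ⊆ κdag ∧ N.initConf ⊆ κ ∧ N.IsConfiguration κ ∧
  ∀ t : N.T, Sum.inr t ∈ κ → ∀ p ∈ N.post t, Sum.inl p ∈ κ

section Stmt9Aux3

variable {N : PetriNet} {κdag : Set N.Node}

lemma stmt9_inv_init (hN : N.IsOccurrenceNet) (hκ : N.IsMaxConfiguration κdag) :
    Stmt9Inv N κdag N.initConf := by
  refine ⟨stmt9_init_subset hN hκ, subset_rfl, ⟨?_, ?_⟩, ?_⟩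
  · rintro x y hxy ⟨p, hp, rfl⟩
    rcases stmt9_causLe_inl hxy with rfl | ⟨s, hs, _⟩
    · exact ⟨p, hp, rfl⟩
    · exact absurd hs (hp s)
  · rintro x hx y ⟨p, hp, rfl⟩ hc
    obtain ⟨t1, t2, _, _, h2, _⟩ := hc
    exact stmt9_minimal_no_trans hp h2
  · rintro t ⟨p, hp, h⟩
    exact absurd h (by simp)

/-- If `κ` is strictly inside `κ†`, some transition of `κ†` extends `κ`. -/
lemma stmt9_extends_exists [Fintype N.P] [Fintype N.T]
    (hN : N.IsOccurrenceNet) (hκ : N.IsMaxConfiguration κdag)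
    {κ : Set N.Node} (hinv : Stmt9Inv N κdag κ) (hne : κ ≠ κdag) :
    ∃ t : N.T, Sum.inr t ∈ κdag ∧ N.Extends κ t := by
  obtain ⟨hsub, hinit, hκconf, hpost⟩ := hinv
  -- the set of not-yet-fired transitions of κ†
  set S : Set N.T := {t : N.T | Sum.inr t ∈ κdag ∧ Sum.inr t ∉ κ} with hS
  have hSne : S.Nonempty := by
    obtain ⟨x, hx, hxκ⟩ := Set.exists_of_ssubset (hsub.ssubset_of_ne hne)
    cases x with
    | inr t => exact ⟨t, hx, hxκ⟩
    | inl p =>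
      have hpmin : ¬ N.Minimal p := fun hmin => hxκ (hinit ⟨p, hmin, rfl⟩)
      simp only [PetriNet.Minimal, not_forall, not_not] at hpmin
      obtain ⟨s, hs⟩ := hpmin
      refine ⟨s, hκ.1.1 _ _ (Relation.ReflTransGen.single (stmt9_prec_inr_inl hs)) hx, ?_⟩
      exact fun hsκ => hxκ (hpost s hsκ p hs)
  obtain ⟨t, htS, hmin⟩ := Set.exists_min_image S
    (fun t => ({x : N.Node | N.causLe x (Sum.inr t)}).ncard) (Set.toFinite S) hSne
  -- the preset of `t` is already in `κ`
  have hpre : ∀ p ∈ N.pre t, Sum.inl p ∈ κ := by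
    intro p hp
    by_cases hmp : N.Minimal p
    · exact hinit ⟨p, hmp, rfl⟩
    · simp only [PetriNet.Minimal, not_forall, not_not] at hmp
      obtain ⟨s, hs⟩ := hmp
      have hslep : N.causLe (Sum.inr s) (Sum.inl p) :=
        Relation.ReflTransGen.single (stmt9_prec_inr_inl hs)
      have hplet : N.causLe (Sum.inl p) (Sum.inr t) :=
        Relation.ReflTransGen.single (stmt9_prec_inl_inr hp)
      have hsκdag : Sum.inr s ∈ κdag :=
        hκ.1.1 _ _ hslep (stmt9_pre_subset hκ htS.1 hp)
      by_contra hpκ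
      have hsκ : Sum.inr s ∉ κ := fun h => hpκ (hpost s h p hs)
      have hsS : s ∈ S := ⟨hsκdag, hsκ⟩
      -- strictly smaller past, contradicting minimality of `t`
      have hss : {x : N.Node | N.causLe x (Sum.inr s)} ⊂ {x : N.Node | N.causLe x (Sum.inr t)} := by
        constructor
        · intro x hx
          exact hx.trans (hslep.trans hplet)
        · intro hcon
          have h1 : N.causLe (Sum.inr t) (Sum.inr s) := hcon Relation.ReflTransGen.refl
          have h2 : Sum.inr s = Sum.inr t := hN.2.1 _ _ (hslep.trans hplet) h1
          have h3 : Sum.inl p = Sum.inr t := hN.2.1 _ _ hplet (h2 ▸ hslep)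
          exact Sum.inl_ne_inr h3
      exact absurd (hmin s hsS) (not_le.mpr (Set.ncard_lt_ncard hss (Set.toFinite _)))
  refine ⟨t, htS.1, htS.2, hpre, ?_⟩
  -- the extension is a configuration
  have hsub' : κ ∪ {Sum.inr t} ∪ Sum.inl '' N.post t ⊆ κdag := by
    rintro x ((hx | rfl) | ⟨q, hq, rfl⟩)
    · exact hsub hx
    · exact htS.1
    · exact stmt9_post_subset hN hκ htS.1 hq
  constructor
  · rintro x y hxy hy
    have hdownt : N.causLe x (Sum.inr t) → x ∈ κ ∪ {Sum.inr t} ∪ Sum.inl '' N.post t := by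
      intro hxt
      rcases stmt9_causLe_inr hxt with rfl | ⟨q, hq, hxq⟩
      · exact Or.inl (Or.inr rfl)
      · exact Or.inl (Or.inl (hκconf.1 x _ hxq (hpre q hq)))
    rcases hy with (hy | rfl) | ⟨q, hq, rfl⟩
    · exact Or.inl (Or.inl (hκconf.1 x y hxy hy))
    · exact hdownt hxy
    · rcases stmt9_causLe_inl hxy with rfl | ⟨s, hs, hxs⟩
      · exact Or.inr ⟨q, hq, rfl⟩
      · have : s = t := hN.2.2.2.1 q hs hq
        subst this
        exact hdownt hxs
  · intro x hx y hy hc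
    exact hκ.1.2 x (hsub' hx) y (hsub' hy) hc

/-- Firing a κ†-transition preserves the invariant. -/
lemma stmt9_inv_step (hN : N.IsOccurrenceNet) (hκ : N.IsMaxConfiguration κdag)
    {κ : Set N.Node} (hinv : Stmt9Inv N κdag κ) {t : N.T}
    (htκ : Sum.inr t ∈ κdag) (hext : N.Extends κ t) :
    Stmt9Inv N κdag (κ ∪ {Sum.inr t} ∪ Sum.inl '' N.post t) := by
  refine ⟨?_, fun x hx => Or.inl (Or.inl (hinv.2.1 hx)), hext.2.2, ?_⟩
  · rintro x ((hx | rfl) | ⟨q, hq, rfl⟩)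
    · exact hinv.1 hx
    · exact htκ
    · exact stmt9_post_subset hN hκ htκ hq
  · rintro s ((hs | hs) | ⟨q, hq, hqs⟩) p hp
    · exact Or.inl (Or.inl (hinv.2.2.2 s hs p hp))
    · rw [Set.mem_singleton_iff, Sum.inr.injEq] at hs
      subst hs
      exact Or.inr ⟨p, hp, rfl⟩
    · exact absurd hqs (by simp)

/-- Lower bound on a transition's date. -/
lemma stmt9_date_ge (τ : N.T → ℝ≥0∞) (init : N.P → ℝ≥0∞) (t : N.T) :
    τ t ≤ N.date τ init (Sum.inr t) := by
  have h1 : (N.dateF τ init)^[1] ⊥ (Sum.inr t) = τ t := by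
    simp [PetriNet.dateF]
  calc τ t = (N.dateF τ init)^[1] ⊥ (Sum.inr t) := h1.symm
    _ ≤ ⨆ k, (N.dateF τ init)^[k] ⊥ (Sum.inr t) := le_iSup (fun k => (N.dateF τ init)^[k] ⊥ (Sum.inr t)) 1
    _ = N.date τ init (Sum.inr t) := (iSup_apply).symm

/-- Upper bound: the date of a node of κ† is at most its execution time. -/
lemma stmt9_date_le (τ : N.T → ℝ≥0∞) (init : N.P → ℝ≥0∞) {x : N.Node}
    (hx : x ∈ κdag) : N.date τ init x ≤ N.execTime τ init κdag :=
  le_biSup _ hx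

end Stmt9Aux3
section Stmt9Aux4

variable {N : PetriNet} {κdag : Set N.Node}

/-- Under the latency hypothesis, there is a race step from any strict sub-configuration
of κ† firing a transition of κ†. -/
lemma stmt9_step_exists [Fintype N.P] [Fintype N.T]
    (hN : N.IsOccurrenceNet) (hκ : N.IsMaxConfiguration κdag)
    {τ' : N.T → ℝ≥0∞} {init : N.P → ℝ≥0∞}
    (hbig : ∀ t : N.T, Sum.inr t ∉ κdag → N.execTime τ' init κdag < τ' t)
    {κ : Set N.Node} (hinv : Stmt9Inv N κdag κ) (hne : κ ≠ κdag) :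
    ∃ t : N.T, Sum.inr t ∈ κdag ∧ N.Extends κ t ∧
      N.RaceStep τ' init κ (κ ∪ {Sum.inr t} ∪ Sum.inl '' N.post t) := by
  set E : Set N.T := {t : N.T | Sum.inr t ∈ κdag ∧ N.Extends κ t} with hE
  have hEne : E.Nonempty := by
    obtain ⟨t, h1, h2⟩ := stmt9_extends_exists hN hκ hinv hne
    exact ⟨t, h1, h2⟩
  obtain ⟨t, htE, hmin⟩ := Set.exists_min_image E
    (fun t => N.date τ' init (Sum.inr t)) (Set.toFinite E) hEne
  refine ⟨t, htE.1, htE.2, t, htE.2, ?_, rfl⟩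
  intro t' hext'
  by_cases ht' : Sum.inr t' ∈ κdag
  · exact hmin t' ⟨ht', hext'⟩
  · exact le_of_lt <| calc N.date τ' init (Sum.inr t) ≤ N.execTime τ' init κdag := stmt9_date_le τ' init htE.1
      _ < τ' t' := hbig t' ht'
      _ ≤ N.date τ' init (Sum.inr t') := stmt9_date_ge τ' init t'

/-- Under the latency hypothesis, a race step from an invariant configuration
fires a transition of κ† and preserves the invariant. -/
lemma stmt9_step_inv [Fintype N.P] [Fintype N.T]
    (hN : N.IsOccurrenceNet) (hκ : N.IsMaxConfiguration κdag)
    {τ' : N.T → ℝ≥0∞} {init : N.P → ℝ≥0∞}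
    (hbig : ∀ t : N.T, Sum.inr t ∉ κdag → N.execTime τ' init κdag < τ' t)
    {κ κ' : Set N.Node} (hinv : Stmt9Inv N κdag κ)
    (hstep : N.RaceStep τ' init κ κ') : Stmt9Inv N κdag κ' := by
  obtain ⟨t, hext, hminD, rfl⟩ := hstep
  by_cases hne : κ = κdag
  · subst hne
    exact absurd hext (stmt9_max_no_extends hκ t)
  · have htκdag : Sum.inr t ∈ κdag := by
      by_contra htκ
      obtain ⟨s, hsκdag, hsext⟩ := stmt9_extends_exists hN hκ hinv hne
      have h1 : τ' t ≤ N.date τ' init (Sum.inr t) := stmt9_date_ge τ' init t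
      have h2 : N.date τ' init (Sum.inr t) ≤ N.date τ' init (Sum.inr s) := hminD s hsext
      have h3 : N.date τ' init (Sum.inr s) ≤ N.execTime τ' init κdag :=
        stmt9_date_le τ' init hsκdag
      exact absurd ((h1.trans h2).trans h3) (not_le.mpr (hbig t htκ))
    exact stmt9_inv_step hN hκ hinv htκdag hext

end Stmt9Aux4

/-- key construction lemma of Theorem 1's necessity part: if the
    latencies of all transitions outside a maximal configuration `κ†` exceed the
    execution time of `κ†`, then the race policy executes exactly `κ†`. -/
theorem stmt9 (N : PetriNet) [Fintype N.P] [Fintype N.T] (hN : N.IsOccurrenceNet)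
    (κdag : Set N.Node) (hκdag : N.IsMaxConfiguration κdag)
    (τ τ' : N.T → ℝ≥0∞) (init : N.P → ℝ≥0∞)
    (hsame : ∀ t : N.T, Sum.inr t ∈ κdag → τ' t = τ t)
    (hbig : ∀ t : N.T, Sum.inr t ∉ κdag →
      N.execTime τ' init κdag < τ' t) :
    N.Occurs τ' init κdag ∧ ∀ κ : Set N.Node, N.Occurs τ' init κ → κ = κdag := by
  -- every invariant configuration reaches κ† under the race policy
  have hreach : ∀ n : ℕ, ∀ κ : Set N.Node, Stmt9Inv N κdag κ → (κdag \ κ).ncard ≤ n →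
      Relation.ReflTransGen (N.RaceStep τ' init) κ κdag := by
    intro n
    induction n with
    | zero =>
      intro κ hinv hcard
      have hempty : κdag \ κ = ∅ := by
        rw [← Set.ncard_eq_zero (Set.toFinite _)]
        omega
      have : κ = κdag := Set.Subset.antisymm hinv.1 (Set.diff_eq_empty.mp hempty)
      rw [this]
    | succ n ih =>
      intro κ hinv hcard
      by_cases hne : κ = κdag
      · rw [hne]
      · obtain ⟨t, htκdag, hext, hstep⟩ := stmt9_step_exists hN hκdag hbig hinv hne
        refine Relation.ReflTransGen.head hstep (ih _ (stmt9_inv_step hN hκdag hinv htκdag hext) ?_)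
        have hss : κdag \ (κ ∪ {Sum.inr t} ∪ Sum.inl '' N.post t) ⊂ κdag \ κ := by
          constructor
          · exact Set.diff_subset_diff_right (Set.subset_union_left.trans Set.subset_union_left)
          · intro hcon
            have h1 : Sum.inr t ∈ κdag \ κ := ⟨htκdag, hext.1⟩
            have h2 := hcon h1
            exact h2.2 (Or.inl (Or.inr rfl))
        have := Set.ncard_lt_ncard hss (Set.toFinite _)
        omega
  -- κ† occurs
  have hnoext : ∀ t : N.T, ¬ N.Extends κdag t := stmt9_max_no_extends hκdag
  have hinvκ : ∀ κ : Set N.Node,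
      Relation.ReflTransGen (N.RaceStep τ' init) N.initConf κ → Stmt9Inv N κdag κ := by
    intro κ hr
    induction hr with
    | refl => exact stmt9_inv_init hN hκdag
    | tail _ hstep ih => exact stmt9_step_inv hN hκdag hbig ih hstep
  constructor
  · exact ⟨hreach _ N.initConf (stmt9_inv_init hN hκdag) le_rfl, hnoext⟩
  · rintro κ ⟨hr, hno⟩
    by_contra hne
    obtain ⟨t, -, hext⟩ := stmt9_extends_exists hN hκdag (hinvκ κ hr) hne
    exact hno t hext
end
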